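/- Let Φ: [0,∞) → [0,∞) be a differentiable function satisfying Φ'(t) + 2αΦ(t) ≤ h(t)Φ(t) + k for all t ≥ 0, where α > 0, k ≥ 0, and h: [0,∞) → ℝ is locally integrable with ∫_s^t h(τ)dτ ≤ α(t−s) + m for all t ≥ s ≥ 0 and some m ≥ 0. Then Φ(t) ≤ Φ(0)·e^m·e^{−αt} + k·e^m/α for all t ≥ 0. -/

import Mathlib

open MeasureTheory

/-- Gronwall-type lemma (Lemma 2.8 in the paper). -/
theorem gronwall_type (Φ Φ' h : ℝ → ℝ) (α k m : ℝ)
    (hα : 0 < α) (hk : 0 ≤ k) (hm : 0 ≤ m)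
    (hΦnn : ∀ t : ℝ, 0 ≤ t → 0 ≤ Φ t)
    (hderiv : ∀ t : ℝ, 0 ≤ t → HasDerivWithinAt Φ (Φ' t) (Set.Ici 0) t)
    (hloc : ∀ s t : ℝ, 0 ≤ s → s ≤ t → IntervalIntegrable h volume s t)
    (hh : ∀ s t : ℝ, 0 ≤ s → s ≤ t → (∫ τ in s..t, h τ) ≤ α * (t - s) + m)
    (hineq : ∀ t : ℝ, 0 ≤ t → Φ' t + 2 * α * Φ t ≤ h t * Φ t + k) :
    ∀ t : ℝ, 0 ≤ t →
      Φ t ≤ Φ 0 * Real.exp m * Real.exp (-α * t) + k * Real.exp m / α := by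
  intro T hT
  have hsub : Set.Icc (0:ℝ) T ⊆ Set.Ici 0 := fun x hx => hx.1
  have hΦcont : ContinuousOn Φ (Set.Ici 0) := fun u hu => (hderiv u hu).continuousWithinAt
  have hΦcontIcc : ContinuousOn Φ (Set.Icc 0 T) := hΦcont.mono hsub
  obtain ⟨M, hM⟩ := (isCompact_Icc : IsCompact (Set.Icc (0:ℝ) T)).exists_bound_of_continuousOn
    hΦcontIcc
  have hM0 : 0 ≤ M := le_trans (norm_nonneg _) (hM 0 ⟨le_rfl, hT⟩)
  have hMΦ : ∀ u ∈ Set.Icc (0:ℝ) T, Φ u ≤ M := fun u hu =>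
    (le_abs_self _).trans (by simpa [Real.norm_eq_abs] using hM u hu)
  set C := Φ 0 * Real.exp m * Real.exp (-α * T) + k * Real.exp m / α with hCdef
  have key : ∀ ε : ℝ, 0 < ε → ε ≤ 1 →
      Φ T ≤ Real.exp ε * C + ε * (M * Real.exp (m + 1)) := by
    intro ε hε hε1
    -- approximate h in L¹ by a continuous function g
    have hIcc : IntegrableOn h (Set.Icc 0 T) :=
      (intervalIntegrable_iff_integrableOn_Icc_of_le hT).1 (hloc 0 T le_rfl hT)
    set h' : ℝ → ℝ := (Set.Icc (0:ℝ) T).indicator h with hh'def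
    have hh'int : Integrable h' := hIcc.integrable_indicator measurableSet_Icc
    obtain ⟨g, -, hgL1, hgcont, hgint⟩ := hh'int.exists_hasCompactSupport_integral_sub_le hε
    -- L¹ distance of h and g on subintervals of [0, T]
    have hdist : ∀ u : ℝ, 0 ≤ u → u ≤ T → (∫ τ in u..T, |h τ - g τ|) ≤ ε := by
      intro u hu huT
      rw [intervalIntegral.integral_of_le huT]
      have heq : ∀ᵐ τ ∂(volume.restrict (Set.Ioc u T)), |h τ - g τ| = ‖h' τ - g τ‖ := by
        refine (ae_restrict_iff' measurableSet_Ioc).2 (Filter.Eventually.of_forall fun τ hτ => ?_)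
        have hmem : τ ∈ Set.Icc (0:ℝ) T := ⟨hu.trans hτ.1.le, hτ.2⟩
        rw [Real.norm_eq_abs, hh'def, Set.indicator_of_mem hmem]
      calc (∫ τ in Set.Ioc u T, |h τ - g τ|)
          = ∫ τ in Set.Ioc u T, ‖h' τ - g τ‖ := integral_congr_ae heq
        _ ≤ ∫ τ, ‖h' τ - g τ‖ :=
            setIntegral_le_integral (hh'int.sub hgint).norm
              (Filter.Eventually.of_forall fun τ => norm_nonneg _)
        _ ≤ ε := hgL1
    -- the primitive of g
    set G : ℝ → ℝ := fun u => ∫ τ in (0:ℝ)..u, g τ with hGdef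
    have hGderiv : ∀ u : ℝ, HasDerivAt G (g u) u := fun u =>
      intervalIntegral.integral_hasDerivAt_right
        (hgcont.intervalIntegrable (μ := volume) 0 u)
        (hgcont.stronglyMeasurable.stronglyMeasurableAtFilter) hgcont.continuousAt
    have hGcont : Continuous G := by
      rw [continuous_iff_continuousAt]; exact fun u => (hGderiv u).continuousAt
    have hG0 : G 0 = 0 := intervalIntegral.integral_same
    have hGsub : ∀ u : ℝ, G T - G u = ∫ τ in u..T, g τ := by
      intro u
      have h2 := intervalIntegral.integral_add_adjacent_intervals
        (hgcont.intervalIntegrable (μ := volume) 0 u) (hgcont.intervalIntegrable (μ := volume) u T)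
      simp only [hGdef]
      linarith
    have hGbound : ∀ u : ℝ, 0 ≤ u → u ≤ T → G T - G u ≤ α * (T - u) + m + ε := by
      intro u hu huT
      rw [hGsub u]
      have h1 : (∫ τ in u..T, g τ) - (∫ τ in u..T, h τ) = ∫ τ in u..T, (g τ - h τ) :=
        (intervalIntegral.integral_sub (hgcont.intervalIntegrable u T) (hloc u T hu huT)).symm
      have h2 : (∫ τ in u..T, (g τ - h τ)) ≤ ∫ τ in u..T, |h τ - g τ| := by
        refine intervalIntegral.integral_mono_on huT
          ((hgcont.intervalIntegrable u T).sub (hloc u T hu huT))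
          ((hloc u T hu huT).sub (hgcont.intervalIntegrable u T)).abs
          (fun x _ => ?_)
        rw [abs_sub_comm]
        exact le_abs_self _
      have h3 := hdist u hu huT
      have h4 := hh u T hu huT
      linarith
    -- the auxiliary function f = Φ * exp(2αu - G u)
    set E : ℝ → ℝ := fun u => Real.exp (2 * α * u - G u) with hEdef
    have hEpos : ∀ u, 0 < E u := fun u => Real.exp_pos _
    have hEderiv : ∀ u : ℝ, HasDerivAt E (E u * (2 * α - g u)) u := by
      intro u
      have h1 : HasDerivAt (fun u : ℝ => 2 * α * u - G u) (2 * α - g u) u := by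
        have h0 := ((hasDerivAt_id u).const_mul (2 * α)).sub (hGderiv u)
        rw [mul_one] at h0
        exact h0
      exact h1.exp
    have hEcont : Continuous E :=
      Real.continuous_exp.comp ((continuous_const.mul continuous_id).sub hGcont)
    set f : ℝ → ℝ := fun u => Φ u * E u with hfdef
    set f' : ℝ → ℝ := fun u => Φ' u * E u + Φ u * (E u * (2 * α - g u)) with hf'def
    have hfderiv : ∀ u ∈ Set.Ioo (0:ℝ) T, HasDerivWithinAt f (f' u) (Set.Ioi u) u := by
      intro u hu
      have hΦd : HasDerivWithinAt Φ (Φ' u) (Set.Ioi u) u :=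
        (hderiv u hu.1.le).mono (fun x hx => (hu.1.trans hx).le)
      exact hΦd.mul (hEderiv u).hasDerivWithinAt
    have hfcont : ContinuousOn f (Set.Icc 0 T) := hΦcontIcc.mul hEcont.continuousOn
    set φ : ℝ → ℝ := fun u => ((h u - g u) * Φ u + k) * E u with hφdef
    have hfle : ∀ u ∈ Set.Ioo (0:ℝ) T, f' u ≤ φ u := by
      intro u hu
      have h1 := hineq u hu.1.le
      have h2 : f' u = (Φ' u + 2 * α * Φ u - g u * Φ u) * E u := by
        simp only [hf'def]; ring
      rw [h2, hφdef]
      apply mul_le_mul_of_nonneg_right _ (hEpos u).le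
      linarith
    have hφint : IntervalIntegrable φ volume 0 T := by
      have h1 : IntervalIntegrable (fun u => h u * (Φ u * E u)) volume 0 T := by
        refine (hloc 0 T le_rfl hT).mul_continuousOn ?_
        rw [Set.uIcc_of_le hT]
        exact hΦcontIcc.mul hEcont.continuousOn
      have h2 : IntervalIntegrable (fun u => (k - g u * Φ u) * E u) volume 0 T := by
        apply ContinuousOn.intervalIntegrable
        rw [Set.uIcc_of_le hT]
        exact ((continuousOn_const.sub (hgcont.continuousOn.mul hΦcontIcc)).mul
          hEcont.continuousOn)
      have h3 : φ = fun u => h u * (Φ u * E u) + (k - g u * Φ u) * E u := by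
        funext u; simp only [hφdef]; ring
      rw [h3]
      exact h1.add h2
    have hφIcc : IntegrableOn φ (Set.Icc 0 T) :=
      (intervalIntegrable_iff_integrableOn_Icc_of_le hT).1 hφint
    have hmain : f T - f 0 ≤ ∫ u in (0:ℝ)..T, φ u :=
      intervalIntegral.sub_le_integral_of_hasDeriv_right_of_le hT hfcont hfderiv hφIcc hfle
    have hf0 : f 0 = Φ 0 := by
      simp [hfdef, hEdef, hG0]
    -- multiply by P = exp (G T - 2 α T)
    set P : ℝ → ℝ := fun u => Real.exp (G T - 2 * α * T) with hPdef
    have hPpos : 0 < Real.exp (G T - 2 * α * T) := Real.exp_pos _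
    have hΦT : Φ T = f T * Real.exp (G T - 2 * α * T) := by
      simp only [hfdef, hEdef]
      rw [mul_assoc, ← Real.exp_add]
      ring_nf
      simp
    have hfT : f T ≤ Φ 0 + ∫ u in (0:ℝ)..T, φ u := by
      rw [← hf0]; linarith
    have step1 : Φ T ≤ Φ 0 * Real.exp (G T - 2 * α * T)
        + (∫ u in (0:ℝ)..T, φ u) * Real.exp (G T - 2 * α * T) := by
      rw [hΦT, ← add_mul]
      exact mul_le_mul_of_nonneg_right hfT hPpos.le
    -- bound the first term
    have hGT : G T ≤ α * T + m + ε := by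
      have := hGbound 0 le_rfl hT
      simpa [hG0] using this
    have bound1 : Φ 0 * Real.exp (G T - 2 * α * T)
        ≤ Real.exp ε * (Φ 0 * Real.exp m * Real.exp (-α * T)) := by
      have h1 : Real.exp (G T - 2 * α * T) ≤ Real.exp (ε + m + (-α * T)) := by
        apply Real.exp_le_exp.2
        linarith
      calc Φ 0 * Real.exp (G T - 2 * α * T) ≤ Φ 0 * Real.exp (ε + m + (-α * T)) :=
            mul_le_mul_of_nonneg_left h1 (hΦnn 0 le_rfl)
        _ = Real.exp ε * (Φ 0 * Real.exp m * Real.exp (-α * T)) := by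
            rw [Real.exp_add, Real.exp_add]; ring
    -- bound the integral term
    have hcontexp : Continuous fun u : ℝ => Real.exp (m + ε - α * (T - u)) :=
      Real.continuous_exp.comp
        (continuous_const.sub (continuous_const.mul (continuous_const.sub continuous_id)))
    have hkexpint : IntervalIntegrable (fun u : ℝ => k * Real.exp (m + ε - α * (T - u)))
        volume 0 T := (continuous_const.mul hcontexp).intervalIntegrable _ _
    have habsint : IntervalIntegrable
        (fun u : ℝ => |h u - g u| * (M * Real.exp (m + ε))) volume 0 T :=
      (((hloc 0 T le_rfl hT).sub (hgcont.intervalIntegrable 0 T)).abs).mul_const _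
    set ma : ℝ → ℝ := fun u =>
      |h u - g u| * (M * Real.exp (m + ε)) + k * Real.exp (m + ε - α * (T - u)) with hmadef
    have hmaint : IntervalIntegrable ma volume 0 T := habsint.add hkexpint
    have hptwise : ∀ u ∈ Set.Icc (0:ℝ) T,
        φ u * Real.exp (G T - 2 * α * T) ≤ ma u := by
      intro u hu
      have hA : φ u * Real.exp (G T - 2 * α * T)
          = ((h u - g u) * Φ u + k) * Real.exp ((G T - G u) - 2 * α * (T - u)) := by
        simp only [hφdef, hEdef]
        rw [mul_assoc, ← Real.exp_add]
        ring_nf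
      rw [hA]
      have hexp1 : Real.exp ((G T - G u) - 2 * α * (T - u))
          ≤ Real.exp (m + ε - α * (T - u)) := by
        apply Real.exp_le_exp.2
        have := hGbound u hu.1 hu.2
        have hTu : 0 ≤ T - u := by linarith [hu.2]
        nlinarith [mul_nonneg hα.le hTu]
      have hcoeff : (h u - g u) * Φ u + k ≤ |h u - g u| * M + k := by
        have : (h u - g u) * Φ u ≤ |h u - g u| * M :=
          mul_le_mul (le_abs_self _) (hMΦ u hu) (hΦnn u hu.1) (abs_nonneg _)
        linarith
      have hcoeffnn : 0 ≤ |h u - g u| * M + k :=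
        add_nonneg (mul_nonneg (abs_nonneg _) hM0) hk
      calc ((h u - g u) * Φ u + k) * Real.exp ((G T - G u) - 2 * α * (T - u))
          ≤ (|h u - g u| * M + k) * Real.exp ((G T - G u) - 2 * α * (T - u)) :=
            mul_le_mul_of_nonneg_right hcoeff (Real.exp_pos _).le
        _ ≤ (|h u - g u| * M + k) * Real.exp (m + ε - α * (T - u)) :=
            mul_le_mul_of_nonneg_left hexp1 hcoeffnn
        _ = |h u - g u| * M * Real.exp (m + ε - α * (T - u))
            + k * Real.exp (m + ε - α * (T - u)) := by ring
        _ ≤ ma u := by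
            simp only [hmadef]
            have h5 : Real.exp (m + ε - α * (T - u)) ≤ Real.exp (m + ε) := by
              apply Real.exp_le_exp.2
              have hTu : 0 ≤ T - u := by linarith [hu.2]
              nlinarith [mul_nonneg hα.le hTu]
            have h6 : |h u - g u| * M * Real.exp (m + ε - α * (T - u))
                ≤ |h u - g u| * (M * Real.exp (m + ε)) := by
              rw [← mul_assoc]
              exact mul_le_mul_of_nonneg_left h5 (mul_nonneg (abs_nonneg _) hM0)
            linarith
    have step2 : (∫ u in (0:ℝ)..T, φ u) * Real.exp (G T - 2 * α * T)
        ≤ ∫ u in (0:ℝ)..T, ma u := by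
      rw [← intervalIntegral.integral_mul_const]
      exact intervalIntegral.integral_mono_on hT (hφint.mul_const _) hmaint hptwise
    -- compute/bound the integral of the majorant
    have hmaval : (∫ u in (0:ℝ)..T, ma u)
        ≤ ε * (M * Real.exp (m + ε)) + k * Real.exp (m + ε) / α := by
      have hsplit : (∫ u in (0:ℝ)..T, ma u)
          = (∫ u in (0:ℝ)..T, |h u - g u|) * (M * Real.exp (m + ε))
            + k * ∫ u in (0:ℝ)..T, Real.exp (m + ε - α * (T - u)) := by
        simp only [hmadef]
        rw [intervalIntegral.integral_add habsint hkexpint,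
          intervalIntegral.integral_mul_const, intervalIntegral.integral_const_mul]
      rw [hsplit]
      have hint1 : (∫ u in (0:ℝ)..T, |h u - g u|) * (M * Real.exp (m + ε))
          ≤ ε * (M * Real.exp (m + ε)) :=
        mul_le_mul_of_nonneg_right (hdist 0 le_rfl hT)
          (mul_nonneg hM0 (Real.exp_pos _).le)
      have hint2 : (∫ u in (0:ℝ)..T, Real.exp (m + ε - α * (T - u)))
          ≤ Real.exp (m + ε) / α := by
        have hanti : ∀ u ∈ Set.uIcc (0:ℝ) T,
            HasDerivAt (fun u => Real.exp (m + ε - α * (T - u)) / α)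
              (Real.exp (m + ε - α * (T - u))) u := by
          intro u _
          have h1 : HasDerivAt (fun u : ℝ => m + ε - α * (T - u)) α u := by
            simpa using (((hasDerivAt_id u).const_sub T).const_mul α).const_sub (m + ε)
          have h2 := (h1.exp).div_const α
          simpa [mul_div_assoc, mul_comm, mul_div_cancel_right₀, hα.ne'] using h2
        rw [intervalIntegral.integral_eq_sub_of_hasDerivAt hanti
          (hcontexp.intervalIntegrable _ _)]
        have h3 : Real.exp (m + ε - α * (T - 0)) / α ≥ 0 := by positivity
        have h4 : Real.exp (m + ε - α * (T - T)) / α = Real.exp (m + ε) / α := by norm_num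
        rw [h4]
        linarith
      have := mul_le_mul_of_nonneg_left hint2 hk
      calc (∫ u in (0:ℝ)..T, |h u - g u|) * (M * Real.exp (m + ε))
            + k * ∫ u in (0:ℝ)..T, Real.exp (m + ε - α * (T - u))
          ≤ ε * (M * Real.exp (m + ε)) + k * (Real.exp (m + ε) / α) := by linarith
        _ = ε * (M * Real.exp (m + ε)) + k * Real.exp (m + ε) / α := by ring
    -- combine
    have final : Φ T ≤ Real.exp ε * (Φ 0 * Real.exp m * Real.exp (-α * T))
        + ε * (M * Real.exp (m + ε)) + k * Real.exp (m + ε) / α := by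
      linarith
    have hexpε : Real.exp (m + ε) = Real.exp ε * Real.exp m := by
      rw [← Real.exp_add]; ring_nf
    have hexp1 : Real.exp (m + ε) ≤ Real.exp (m + 1) :=
      Real.exp_le_exp.2 (by linarith)
    have hterm2 : ε * (M * Real.exp (m + ε)) ≤ ε * (M * Real.exp (m + 1)) := by
      apply mul_le_mul_of_nonneg_left _ hε.le
      exact mul_le_mul_of_nonneg_left hexp1 hM0
    have hterm3 : k * Real.exp (m + ε) / α = Real.exp ε * (k * Real.exp m / α) := by
      rw [hexpε]; ring
    rw [hCdef]
    calc Φ T ≤ Real.exp ε * (Φ 0 * Real.exp m * Real.exp (-α * T))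
          + ε * (M * Real.exp (m + ε)) + k * Real.exp (m + ε) / α := final
      _ ≤ Real.exp ε * (Φ 0 * Real.exp m * Real.exp (-α * T))
          + Real.exp ε * (k * Real.exp m / α) + ε * (M * Real.exp (m + 1)) := by
          rw [hterm3] at *
          linarith
      _ = Real.exp ε * (Φ 0 * Real.exp m * Real.exp (-α * T) + k * Real.exp m / α)
          + ε * (M * Real.exp (m + 1)) := by ring
  -- pass to the limit ε → 0⁺
  have hcontF : Continuous fun ε : ℝ => Real.exp ε * C + ε * (M * Real.exp (m + 1)) :=
    (Real.continuous_exp.mul continuous_const).add (continuous_id.mul continuous_const)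
  have htend : Filter.Tendsto (fun ε : ℝ => Real.exp ε * C + ε * (M * Real.exp (m + 1)))
      (nhdsWithin 0 (Set.Ioi 0)) (nhds C) := by
    have h1 := hcontF.tendsto 0
    simp only [Real.exp_zero, one_mul, zero_mul, add_zero] at h1
    exact h1.mono_left nhdsWithin_le_nhds
  refine ge_of_tendsto htend ?_
  filter_upwards [Ioc_mem_nhdsGT_of_mem (Set.left_mem_Ico.2 one_pos)] with ε hε
  exact key ε hε.1 hε.2
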